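/- Let w : Fin 3 → ℝ with each w i equal to 1 or −1, let Q be the diagonal quadratic form on Fin 3 → ℝ with weights w, let A = CliffordAlgebra Q, and let conj : A → A denote Clifford conjugation (reversal composed with grade involution). Let a, b, c, x ∈ A satisfy a·x + x·b = c, and set d := a^2 + b·conj b + a·(b + conj b). Then d·x = a·c + c·conj b. -/
import Mathlib

set_option maxHeartbeats 1600000


/-- Clifford conjugation: reversal composed with grade involution. -/
noncomputable def cliffordConj {n : ℕ} (w : Fin n → ℝ) :
    CliffordAlgebra (QuadraticMap.weightedSumSquares ℝ w) →
      CliffordAlgebra (QuadraticMap.weightedSumSquares ℝ w) :=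
  fun a => CliffordAlgebra.reverse (CliffordAlgebra.involute a)

namespace Cl3Helper

open CliffordAlgebra Submodule

variable (w : Fin 3 → ℝ)

/-- The generators of the Clifford algebra. -/
noncomputable def gam (i : Fin 3) :
    CliffordAlgebra (QuadraticMap.weightedSumSquares ℝ w) :=
  ι (QuadraticMap.weightedSumSquares ℝ w) (Pi.single i 1)

lemma Q_single (i : Fin 3) :
    QuadraticMap.weightedSumSquares ℝ w (Pi.single i 1) = w i := by
  fin_cases i <;>
    simp [QuadraticMap.weightedSumSquares_apply, Fin.sum_univ_three, Pi.single_apply]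

lemma gam_sq (i : Fin 3) :
    gam w i * gam w i =
      algebraMap ℝ (CliffordAlgebra (QuadraticMap.weightedSumSquares ℝ w)) (w i) := by
  rw [gam, ι_sq_scalar, Q_single]

lemma gam_sq_smul (i : Fin 3) :
    gam w i * gam w i = w i • (1 : CliffordAlgebra (QuadraticMap.weightedSumSquares ℝ w)) := by
  rw [gam_sq, Algebra.algebraMap_eq_smul_one]

lemma gam_anticomm {i j : Fin 3} (h : i ≠ j) :
    gam w i * gam w j = -(gam w j * gam w i) := by
  have horth : QuadraticMap.polar (QuadraticMap.weightedSumSquares ℝ w)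
      (Pi.single i 1) (Pi.single j 1) = 0 := by
    rw [QuadraticMap.polar]
    fin_cases i <;> fin_cases j <;> simp_all <;>
      simp [QuadraticMap.weightedSumSquares_apply, Fin.sum_univ_three, Pi.single_apply] <;> ring
  have := ι_mul_ι_add_swap (Q := QuadraticMap.weightedSumSquares ℝ w)
    (Pi.single i 1) (Pi.single j 1)
  rw [horth, map_zero] at this
  rw [gam, gam]
  exact eq_neg_of_add_eq_zero_left this

lemma gam_swap₂ {i j : Fin 3} (h : i ≠ j)
    (z : CliffordAlgebra (QuadraticMap.weightedSumSquares ℝ w)) :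
    gam w i * (gam w j * z) = -(gam w j * (gam w i * z)) := by
  rw [← mul_assoc, gam_anticomm w h, neg_mul, mul_assoc]

lemma gam_sq₂ (i : Fin 3)
    (z : CliffordAlgebra (QuadraticMap.weightedSumSquares ℝ w)) :
    gam w i * (gam w i * z) = w i • z := by
  rw [← mul_assoc, gam_sq_smul, smul_mul_assoc, one_mul]

/-- The pseudoscalar. -/
noncomputable def omg : CliffordAlgebra (QuadraticMap.weightedSumSquares ℝ w) :=
  gam w 0 * (gam w 1 * gam w 2)

/-- A spanning set of monomials. -/
noncomputable def bset : Set (CliffordAlgebra (QuadraticMap.weightedSumSquares ℝ w)) :=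
  {1, gam w 0, gam w 1, gam w 2, gam w 0 * gam w 1, gam w 0 * gam w 2,
    gam w 1 * gam w 2, omg w}

local notation "A" => CliffordAlgebra (QuadraticMap.weightedSumSquares ℝ w)

lemma gam_mul_mem_span (i : Fin 3) :
    ∀ {y : A}, y ∈ span ℝ (bset w) → gam w i * y ∈ span ℝ (bset w) := by
  intro y hy
  induction hy using Submodule.span_induction with
  | mem g hg =>
    have s10 := gam_swap₂ w (show (1 : Fin 3) ≠ 0 by decide)
    have s20 := gam_swap₂ w (show (2 : Fin 3) ≠ 0 by decide)
    have s21 := gam_swap₂ w (show (2 : Fin 3) ≠ 1 by decide)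
    have b10 := gam_anticomm w (show (1 : Fin 3) ≠ 0 by decide)
    have b20 := gam_anticomm w (show (2 : Fin 3) ≠ 0 by decide)
    have b21 := gam_anticomm w (show (2 : Fin 3) ≠ 1 by decide)
    have sq2 := gam_sq₂ w
    have sqe := gam_sq_smul w
    have hi : ∀ j : Fin 3, j = 0 ∨ j = 1 ∨ j = 2 := by decide
    simp only [bset, omg, Set.mem_insert_iff, Set.mem_singleton_iff] at hg
    have m1 : (1 : A) ∈ bset w := Set.mem_insert _ _
    have m2 : gam w 0 ∈ bset w := Set.mem_insert_of_mem _ (Set.mem_insert _ _)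
    have m3 : gam w 1 ∈ bset w :=
      Set.mem_insert_of_mem _ (Set.mem_insert_of_mem _ (Set.mem_insert _ _))
    have m4 : gam w 2 ∈ bset w :=
      Set.mem_insert_of_mem _ (Set.mem_insert_of_mem _ (Set.mem_insert_of_mem _
        (Set.mem_insert _ _)))
    have m5 : gam w 0 * gam w 1 ∈ bset w :=
      Set.mem_insert_of_mem _ (Set.mem_insert_of_mem _ (Set.mem_insert_of_mem _
        (Set.mem_insert_of_mem _ (Set.mem_insert _ _))))
    have m6 : gam w 0 * gam w 2 ∈ bset w :=
      Set.mem_insert_of_mem _ (Set.mem_insert_of_mem _ (Set.mem_insert_of_mem _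
        (Set.mem_insert_of_mem _ (Set.mem_insert_of_mem _ (Set.mem_insert _ _)))))
    have m7 : gam w 1 * gam w 2 ∈ bset w :=
      Set.mem_insert_of_mem _ (Set.mem_insert_of_mem _ (Set.mem_insert_of_mem _
        (Set.mem_insert_of_mem _ (Set.mem_insert_of_mem _ (Set.mem_insert_of_mem _
          (Set.mem_insert _ _))))))
    have m8 : omg w ∈ bset w :=
      Set.mem_insert_of_mem _ (Set.mem_insert_of_mem _ (Set.mem_insert_of_mem _
        (Set.mem_insert_of_mem _ (Set.mem_insert_of_mem _ (Set.mem_insert_of_mem _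
          (Set.mem_insert_of_mem _ rfl))))))
    rcases hg with rfl | rfl | rfl | rfl | rfl | rfl | rfl | rfl <;>
        rcases hi i with rfl | rfl | rfl <;>
      (try simp only [mul_one, mul_assoc, s10, s20, s21, b10, b20, b21, sq2, sqe,
        mul_neg, neg_neg, mul_smul_comm, smul_mul_assoc, one_mul, smul_neg])
    · exact subset_span m2
    · exact subset_span m3
    · exact subset_span m4
    · exact smul_mem _ _ (subset_span m1)
    · exact neg_mem (subset_span m5)
    · exact neg_mem (subset_span m6)
    · exact subset_span m5
    · exact smul_mem _ _ (subset_span m1)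
    · exact neg_mem (subset_span m7)
    · exact subset_span m6
    · exact subset_span m7
    · exact smul_mem _ _ (subset_span m1)
    · exact smul_mem _ _ (subset_span m3)
    · exact neg_mem (smul_mem _ _ (subset_span m2))
    · exact subset_span m8
    · exact smul_mem _ _ (subset_span m4)
    · exact neg_mem (subset_span m8)
    · exact neg_mem (smul_mem _ _ (subset_span m2))
    · exact subset_span m8
    · exact smul_mem _ _ (subset_span m4)
    · exact neg_mem (smul_mem _ _ (subset_span m3))
    · exact smul_mem _ _ (subset_span m7)
    · exact neg_mem (smul_mem _ _ (subset_span m6))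
    · exact smul_mem _ _ (subset_span m5)
  | zero => simpa using zero_mem _
  | add u v hu hv ihu ihv => rw [mul_add]; exact add_mem ihu ihv
  | smul r u hu ihu => rw [mul_smul_comm]; exact smul_mem _ _ ihu

lemma ι_eq_sum (m : Fin 3 → ℝ) :
    ι (QuadraticMap.weightedSumSquares ℝ w) m = ∑ i, m i • gam w i := by
  conv_lhs => rw [← Finset.univ_sum_single m]
  rw [map_sum]
  refine Finset.sum_congr rfl fun i _ => ?_
  have h : (Pi.single i (m i) : Fin 3 → ℝ) = m i • (Pi.single i 1 : Fin 3 → ℝ) := by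
    funext j
    by_cases h : j = i <;> simp [Pi.single_apply, h]
  rw [h, map_smul, gam]

lemma mem_span_bset (y : A) : y ∈ span ℝ (bset w) := by
  have key : ∀ y p : A, p ∈ span ℝ (bset w) → y * p ∈ span ℝ (bset w) := by
    intro y
    induction y using CliffordAlgebra.induction with
    | algebraMap r =>
      intro p hp
      rw [← Algebra.smul_def]
      exact smul_mem _ _ hp
    | ι m =>
      intro p hp
      rw [ι_eq_sum, Finset.sum_mul]
      exact sum_mem fun i _ => by
        rw [smul_mul_assoc]; exact smul_mem _ _ (gam_mul_mem_span w i hp)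
    | mul u v ihu ihv => intro p hp; rw [mul_assoc]; exact ihu _ (ihv _ hp)
    | add u v ihu ihv => intro p hp; rw [add_mul]; exact add_mem (ihu _ hp) (ihv _ hp)
  simpa using key y 1 (subset_span (by simp [bset]))

lemma conj_add (u v : A) : cliffordConj w (u + v) = cliffordConj w u + cliffordConj w v := by
  unfold cliffordConj; rw [map_add, map_add]

lemma conj_smul (r : ℝ) (u : A) : cliffordConj w (r • u) = r • cliffordConj w u := by
  unfold cliffordConj; rw [map_smul, map_smul]

lemma conj_zero : cliffordConj w 0 = 0 := by
  unfold cliffordConj; rw [map_zero, map_zero]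

lemma conj_one : cliffordConj w 1 = 1 := by
  unfold cliffordConj
  rw [map_one, CliffordAlgebra.reverse.map_one]

lemma conj_mul (u v : A) : cliffordConj w (u * v) = cliffordConj w v * cliffordConj w u := by
  unfold cliffordConj; rw [map_mul, CliffordAlgebra.reverse.map_mul]

lemma conj_conj (u : A) : cliffordConj w (cliffordConj w u) = u := by
  unfold cliffordConj
  rw [← reverse_involute, reverse_reverse, involute_involute]

lemma conj_gam (i : Fin 3) : cliffordConj w (gam w i) = -gam w i := by
  unfold cliffordConj
  rw [gam, involute_ι, map_neg, reverse_ι]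

lemma conj_gam_pair {i j : Fin 3} (h : i ≠ j) :
    cliffordConj w (gam w i * gam w j) = -(gam w i * gam w j) := by
  rw [conj_mul, conj_gam, conj_gam, neg_mul_neg, gam_anticomm w h.symm]

lemma conj_omg : cliffordConj w (omg w) = omg w := by
  have h : cliffordConj w (omg w) = (gam w 1 * gam w 2) * gam w 0 := by
    rw [omg, conj_mul, conj_gam, conj_gam_pair w (show (1 : Fin 3) ≠ 2 by decide), neg_mul_neg]
  rw [h, omg, mul_assoc, gam_anticomm w (show (2 : Fin 3) ≠ 0 by decide), mul_neg,
    gam_swap₂ w (show (1 : Fin 3) ≠ 0 by decide), neg_neg]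

/-- The center candidates. -/
noncomputable def zset : Set (CliffordAlgebra (QuadraticMap.weightedSumSquares ℝ w)) := {1, omg w}

lemma omg_comm (y : A) : omg w * y = y * omg w := by
  induction y using CliffordAlgebra.induction with
  | algebraMap r => exact (Algebra.commutes r (omg w)).symm
  | ι m =>
    have hgi : ∀ i, omg w * gam w i = gam w i * omg w := by
      have s10 := gam_swap₂ w (show (1 : Fin 3) ≠ 0 by decide)
      have s20 := gam_swap₂ w (show (2 : Fin 3) ≠ 0 by decide)
      have s21 := gam_swap₂ w (show (2 : Fin 3) ≠ 1 by decide)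
      have b10 := gam_anticomm w (show (1 : Fin 3) ≠ 0 by decide)
      have b20 := gam_anticomm w (show (2 : Fin 3) ≠ 0 by decide)
      have b21 := gam_anticomm w (show (2 : Fin 3) ≠ 1 by decide)
      have sq2 := gam_sq₂ w
      have sqe := gam_sq_smul w
      intro i
      have hi : ∀ j : Fin 3, j = 0 ∨ j = 1 ∨ j = 2 := by decide
      rcases hi i with rfl | rfl | rfl <;>
        simp [omg, mul_assoc, s10, s20, s21, b10, b20, b21, sq2, sqe,
          mul_neg, neg_neg, mul_smul_comm, smul_mul_assoc, smul_neg]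
    rw [ι_eq_sum, Finset.mul_sum, Finset.sum_mul]
    exact Finset.sum_congr rfl fun i _ => by rw [mul_smul_comm, smul_mul_assoc, hgi]
  | mul u v ihu ihv => rw [← mul_assoc, ihu, mul_assoc, ihv, mul_assoc]
  | add u v ihu ihv => rw [mul_add, add_mul, ihu, ihv]

lemma zset_comm {z : A} (hz : z ∈ span ℝ (zset w)) (y : A) : z * y = y * z := by
  induction hz using Submodule.span_induction with
  | mem g hg =>
    simp only [zset, Set.mem_insert_iff, Set.mem_singleton_iff] at hg
    rcases hg with rfl | rfl
    · rw [one_mul, mul_one]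
    · exact omg_comm w y
  | zero => rw [zero_mul, mul_zero]
  | add u v hu hv ihu ihv => rw [add_mul, mul_add, ihu, ihv]
  | smul r u hu ihu => rw [smul_mul_assoc, mul_smul_comm, ihu]

lemma add_conj_mem (y : A) : y + cliffordConj w y ∈ span ℝ (zset w) := by
  have hy := mem_span_bset w y
  induction hy using Submodule.span_induction with
  | mem g hg =>
    simp only [bset, Set.mem_insert_iff, Set.mem_singleton_iff] at hg
    rcases hg with rfl | rfl | rfl | rfl | rfl | rfl | rfl | rfl
    · rw [conj_one]
      rw [show (1 : A) + 1 = (2 : ℝ) • 1 by rw [two_smul]]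
      exact smul_mem _ _ (subset_span (by simp [zset]))
    · rw [conj_gam]; simpa using zero_mem _
    · rw [conj_gam]; simpa using zero_mem _
    · rw [conj_gam]; simpa using zero_mem _
    · rw [conj_gam_pair w (by decide)]; simpa using zero_mem _
    · rw [conj_gam_pair w (by decide)]; simpa using zero_mem _
    · rw [conj_gam_pair w (by decide)]; simpa using zero_mem _
    · rw [conj_omg]
      rw [show omg w + omg w = (2 : ℝ) • omg w by rw [two_smul]]
      exact smul_mem _ _ (subset_span (by simp [zset]))
  | zero => rw [conj_zero]; simpa using zero_mem _
  | add u v hu hv ihu ihv =>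
    rw [conj_add]
    rw [add_add_add_comm]
    exact add_mem ihu ihv
  | smul r u hu ihu =>
    rw [conj_smul, ← smul_add]
    exact smul_mem _ _ ihu

end Cl3Helper

theorem clifford3_sylvester_left_necessary (w : Fin 3 → ℝ)
    (hw : ∀ i, w i = 1 ∨ w i = -1)
    (a b c x : CliffordAlgebra (QuadraticMap.weightedSumSquares ℝ w))
    (hx : a * x + x * b = c) :
    (a ^ 2 + b * cliffordConj w b + a * (b + cliffordConj w b)) * x =
      a * c + c * cliffordConj w b := by
  classical
  have hs : ∀ t, (b + cliffordConj w b) * t = t * (b + cliffordConj w b) :=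
    Cl3Helper.zset_comm w (Cl3Helper.add_conj_mem w b)
  have hufix : cliffordConj w (b * cliffordConj w b) = b * cliffordConj w b := by
    rw [Cl3Helper.conj_mul, Cl3Helper.conj_conj]
  have humem : (2 : ℝ) • (b * cliffordConj w b) ∈ Submodule.span ℝ (Cl3Helper.zset w) := by
    have := Cl3Helper.add_conj_mem w (b * cliffordConj w b)
    rwa [hufix, ← two_smul ℝ] at this
  have hu : ∀ t, (b * cliffordConj w b) * t = t * (b * cliffordConj w b) := by
    intro t
    have h2 := Cl3Helper.zset_comm w humem t
    rw [smul_mul_assoc, mul_smul_comm] at h2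
    have h3 := smul_right_injective _ (two_ne_zero (α := ℝ)) h2
    exact h3
  rw [← hx]
  rw [add_mul, add_mul, hu, mul_assoc a, hs]
  noncomm_ring
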